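/- Let M and M' be minimal node multicuts of (G,B). Define dist(M,M') = Σ_{C' ∈ C_{M'}} |C' \ μ(C',M)|, where C_{M'} is the set of components of G − M' containing at least one terminal, and μ(C',M) is a component C of G − M minimizing |C' \ C|. Then M = M' if and only if dist(M,M') = 0. -/

import Mathlib

open SimpleGraph Set

variable {V : Type*}

/-- The set of terminals occurring in a set `B` of terminal pairs. -/
def terminalSet (B : Set (V × V)) : Set V := {v | ∃ p ∈ B, v = p.1 ∨ v = p.2}

/-- `s` and `t` are separated in `G - M` (the graph obtained by deleting the vertices of `M`). -/
def SepSets (G : SimpleGraph V) (M : Set V) (s t : V) : Prop :=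
  ∀ (hs : s ∈ (Mᶜ : Set V)) (ht : t ∈ (Mᶜ : Set V)),
    ¬ (G.induce (Mᶜ : Set V)).Reachable ⟨s, hs⟩ ⟨t, ht⟩

/-- `M` is a node multicut of `(G, B)`. -/
def IsNodeMulticut (G : SimpleGraph V) (B : Set (V × V)) (M : Set V) : Prop :=
  M ⊆ (terminalSet B)ᶜ ∧ ∀ p ∈ B, SepSets G M p.1 p.2

/-- `M` is a minimal node multicut of `(G, B)`. -/
def IsMinNodeMulticut (G : SimpleGraph V) (B : Set (V × V)) (M : Set V) : Prop :=
  IsNodeMulticut G B M ∧ ∀ M' ⊂ M, ¬ IsNodeMulticut G B M'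

/-- `C` is (the vertex set of) a connected component of `G - M`. -/
def IsCompOf (G : SimpleGraph V) (M : Set V) (C : Set V) : Prop :=
  ∃ c : (G.induce (Mᶜ : Set V)).ConnectedComponent, C = Subtype.val '' c.supp

/-- `dist(M, M')`: the sum, over all components `C'` of `G - M'` containing a terminal, of
`|C' \ C|` where `C` is a component of `G - M` minimizing `|C' \ C|`. -/
noncomputable def mdist (G : SimpleGraph V) (T : Set V) (M M' : Set V) : ℕ :=
  ∑ᶠ C' ∈ {C' : Set V | IsCompOf G M' C' ∧ (C' ∩ T).Nonempty},
    sInf {n : ℕ | ∃ C : Set V, IsCompOf G M C ∧ n = (C' \ C).ncard}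

/-- Reachability inside `G - S`, as a relation on `V`. -/
def Rch (G : SimpleGraph V) (S : Set V) (x y : V) : Prop :=
  ∃ (hx : x ∈ (Sᶜ : Set V)) (hy : y ∈ (Sᶜ : Set V)),
    (G.induce (Sᶜ : Set V)).Reachable ⟨x, hx⟩ ⟨y, hy⟩

lemma Rch.adj {G : SimpleGraph V} {S : Set V} {x y : V} (hx : x ∈ (Sᶜ : Set V))
    (hy : y ∈ (Sᶜ : Set V)) (h : G.Adj x y) : Rch G S x y := by
  refine ⟨hx, hy, Adj.reachable ?_⟩
  simpa [SimpleGraph.induce] using h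

lemma Rch.refl {G : SimpleGraph V} {S : Set V} {x : V} (hx : x ∈ (Sᶜ : Set V)) :
    Rch G S x x := ⟨hx, hx, Reachable.refl _⟩

lemma Rch.trans {G : SimpleGraph V} {S : Set V} {x y z : V}
    (h1 : Rch G S x y) (h2 : Rch G S y z) : Rch G S x z := by
  obtain ⟨hx, hy, h1⟩ := h1
  obtain ⟨hy', hz, h2⟩ := h2
  exact ⟨hx, hz, h1.trans h2⟩

/-- Key walk lemma: a walk in `G - (S \ {v})` from `x` to `y` with `y ∉ S` either witnesses
reachability in `G - S`, or produces neighbours of `v` outside `S` reachable from the ends. -/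
lemma key {G : SimpleGraph V} (S : Set V) (v : V) (hv : v ∈ S) :
    ∀ {x y : V} (W : G.Walk x y),
      (∀ z ∈ W.support, z ∈ ((S \ {v})ᶜ : Set V)) → y ∈ (Sᶜ : Set V) →
      ((x ∈ (Sᶜ : Set V) → Rch G S x y ∨
        ∃ u w, u ∈ (Sᶜ : Set V) ∧ w ∈ (Sᶜ : Set V) ∧ G.Adj v u ∧ G.Adj v w ∧
          Rch G S x u ∧ Rch G S w y) ∧
      (x = v → ∃ w, w ∈ (Sᶜ : Set V) ∧ G.Adj v w ∧ Rch G S w y)) := by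
  intro x y W
  induction W with
  | nil =>
    intro _ hy
    refine ⟨fun hx => Or.inl (Rch.refl hy), fun hxv => ?_⟩
    exact absurd (hxv ▸ hy) (by simpa using hv)
  | @cons a b c h W ih =>
    intro hsupp hy
    have hz : b ∈ ((S \ {v})ᶜ : Set V) := hsupp b (by simp [Walk.support_cons])
    have hz' : b ∉ S ∨ b = v := by
      by_cases hbs : b ∈ S
      · exact Or.inr ((by simpa [Set.mem_diff] using hz : b ∈ S → b = v) hbs)
      · exact Or.inl hbs
    have ihW := ih (fun z hzz => hsupp z (by simp [Walk.support_cons, hzz])) hy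
    constructor
    · intro hx
      rcases hz' with hzS | hzv
      · rcases ihW.1 hzS with hreach | ⟨u, w, hu, hw, hau, haw, hzu, hwy⟩
        · exact Or.inl ((Rch.adj hx hzS h).trans hreach)
        · exact Or.inr ⟨u, w, hu, hw, hau, haw, (Rch.adj hx hzS h).trans hzu, hwy⟩
      · obtain ⟨w, hw, haw, hwy⟩ := ihW.2 hzv
        exact Or.inr ⟨a, w, hx, hw, hzv ▸ h.symm, haw, Rch.refl hx, hwy⟩
    · intro hxv
      have hzv : b ≠ v := fun hzv => G.irrefl (hxv ▸ hzv ▸ h)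
      have hzS : b ∈ (Sᶜ : Set V) := by
        rcases hz' with h' | h'
        · exact h'
        · exact absurd h' hzv
      rcases ihW.1 hzS with hreach | ⟨u, w, hu, hw, hau, haw, hzu, hwy⟩
      · exact ⟨b, hzS, hxv ▸ h, hreach⟩
      · exact ⟨w, hw, haw, hwy⟩

lemma rch_of_mem_comp {G : SimpleGraph V} {M : Set V}
    {c : (G.induce (Mᶜ : Set V)).ConnectedComponent} {x y : V}
    (hx : x ∈ Subtype.val '' c.supp) (hy : y ∈ Subtype.val '' c.supp) : Rch G M x y := by
  obtain ⟨a, ha, rfl⟩ := hx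
  obtain ⟨b, hb, rfl⟩ := hy
  have h1 : (G.induce (Mᶜ : Set V)).connectedComponentMk a = c :=
    (SimpleGraph.ConnectedComponent.mem_supp_iff c a).mp ha
  have h2 : (G.induce (Mᶜ : Set V)).connectedComponentMk b = c :=
    (SimpleGraph.ConnectedComponent.mem_supp_iff c b).mp hb
  exact ⟨a.2, b.2, ConnectedComponent.exact (h1.trans h2.symm)⟩

/-- For minimal node multicuts `M` and `M'` of `(G, B)`,
`M = M'` if and only if `dist(M, M') = 0`. -/
theorem eq_iff_mdist_eq_zero [Fintype V] (G : SimpleGraph V) (B : Set (V × V)) (M M' : Set V)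
    (hM : IsMinNodeMulticut G B M) (hM' : IsMinNodeMulticut G B M') :
    M = M' ↔ mdist G (terminalSet B) M M' = 0 := by
  classical
  constructor
  · -- forward: M = M' → mdist = 0
    rintro rfl
    unfold mdist
    refine finsum_mem_eq_zero_of_forall_eq_zero ?_
    rintro C' ⟨hC', -⟩
    have h0 : (0 : ℕ) ∈ {n : ℕ | ∃ C : Set V, IsCompOf G M C ∧ n = (C' \ C).ncard} :=
      ⟨C', hC', by simp⟩
    exact Nat.eq_zero_of_le_zero (Nat.sInf_le h0)
  · -- backward
    intro hdist
    -- each terminal component of G - M' is contained in a component of G - M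
    have hsub : ∀ C' : Set V, IsCompOf G M' C' → (C' ∩ terminalSet B).Nonempty →
        ∃ C : Set V, IsCompOf G M C ∧ C' ⊆ C := by
      intro C' hC' hCT
      have hfin : ({C' : Set V | IsCompOf G M' C' ∧ (C' ∩ terminalSet B).Nonempty}).Finite :=
        Set.toFinite _
      unfold mdist at hdist
      rw [finsum_mem_eq_finite_toFinset_sum _ hfin] at hdist
      have hterm := (Finset.sum_eq_zero_iff.mp hdist) C'
        (by simp [Set.Finite.mem_toFinset]; exact ⟨hC', hCT⟩)
      -- the inf-set is nonempty
      obtain ⟨τ, hτC, hτT⟩ := hCT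
      have hτM : τ ∈ (Mᶜ : Set V) := fun hτ => (hM.1.1 hτ) hτT
      have hne : (0 : ℕ) ∈ {n : ℕ | ∃ C : Set V, IsCompOf G M C ∧ n = (C' \ C).ncard} := by
        rcases (Nat.sInf_eq_zero.mp hterm) with h | h
        · exact h
        · exfalso
          have : ∃ C : Set V, IsCompOf G M C :=
            ⟨_, (G.induce (Mᶜ : Set V)).connectedComponentMk ⟨τ, hτM⟩, rfl⟩
          obtain ⟨C, hC⟩ := this
          have : ((C' \ C).ncard) ∈ ({} : Set ℕ) := h ▸ ⟨C, hC, rfl⟩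
          simp at this
      obtain ⟨C, hC, hCn⟩ := hne
      refine ⟨C, hC, ?_⟩
      have : (C' \ C) = ∅ := (Set.ncard_eq_zero (Set.toFinite _)).mp hCn.symm
      exact Set.diff_eq_empty.mp this
    -- show M' ⊆ M
    have hMM : M' ⊆ M := by
      intro v hv
      by_contra hvM
      -- minimality of M' : removing v reconnects some pair
      have hsub' : M' \ {v} ⊂ M' := by
        constructor
        · exact Set.diff_subset
        · intro hcon
          exact (hcon hv).2 rfl
      have hnot : ¬ IsNodeMulticut G B (M' \ {v}) := hM'.2 _ hsub'
      have hTsub : (M' \ {v}) ⊆ (terminalSet B)ᶜ := fun a ha => hM'.1.1 ha.1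
      have : ∃ p ∈ B, ¬ SepSets G (M' \ {v}) p.1 p.2 := by
        by_contra hcon
        push_neg at hcon
        exact hnot ⟨hTsub, hcon⟩
      obtain ⟨⟨s, t⟩, hpB, hnsep⟩ := this
      simp only [SepSets, not_forall, not_not] at hnsep
      obtain ⟨hs, ht, hreach⟩ := hnsep
      -- get a walk in G with support avoiding M' \ {v}
      obtain ⟨W0⟩ := hreach
      let W : G.Walk s t := W0.map (SimpleGraph.Embedding.induce ((M' \ {v})ᶜ : Set V)).toHom
      have hWsupp : ∀ z ∈ W.support, z ∈ ((M' \ {v})ᶜ : Set V) := by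
        intro z hz
        replace hz : z ∈ (W0.map (SimpleGraph.Embedding.induce ((M' \ {v})ᶜ : Set V)).toHom).support := hz
        rw [Walk.support_map, List.mem_map] at hz
        obtain ⟨a, _, rfl⟩ := hz
        exact a.2
      have hsT : s ∈ terminalSet B := ⟨(s, t), hpB, Or.inl rfl⟩
      have htT : t ∈ terminalSet B := ⟨(s, t), hpB, Or.inr rfl⟩
      have hsM' : s ∈ (M'ᶜ : Set V) := fun h => (hM'.1.1 h) hsT
      have htM' : t ∈ (M'ᶜ : Set V) := fun h => (hM'.1.1 h) htT
      have hsM : s ∈ (Mᶜ : Set V) := fun h => (hM.1.1 h) hsT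
      have htM : t ∈ (Mᶜ : Set V) := fun h => (hM.1.1 h) htT
      rcases (key M' v hv W hWsupp htM').1 hsM' with hst | ⟨u, w, hu, hw, hau, haw, hsu, hwt⟩
      · -- s reaches t in G - M' : contradicts M' multicut
        obtain ⟨hs', ht', hr⟩ := hst
        exact hM'.1.2 (s, t) hpB hs' ht' hr
      · -- use the component containment
        -- component of s in G - M'
        set cs := (G.induce (M'ᶜ : Set V)).connectedComponentMk ⟨s, hsM'⟩ with hcs
        set ct := (G.induce (M'ᶜ : Set V)).connectedComponentMk ⟨t, htM'⟩ with hct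
        have hCs : IsCompOf G M' (Subtype.val '' cs.supp) := ⟨cs, rfl⟩
        have hCt : IsCompOf G M' (Subtype.val '' ct.supp) := ⟨ct, rfl⟩
        have hsmem : s ∈ Subtype.val '' cs.supp := ⟨⟨s, hsM'⟩, by simp [hcs], rfl⟩
        have htmem : t ∈ Subtype.val '' ct.supp := ⟨⟨t, htM'⟩, by simp [hct], rfl⟩
        obtain ⟨Cs, hCsM, hCsub⟩ := hsub _ hCs ⟨s, hsmem, hsT⟩
        obtain ⟨Ct, hCtM, hCtsub⟩ := hsub _ hCt ⟨t, htmem, htT⟩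
        -- u ∈ val '' cs.supp
        obtain ⟨hs1, hu1, hru⟩ := hsu
        have humem : u ∈ Subtype.val '' cs.supp := by
          refine ⟨⟨u, hu1⟩, ?_, rfl⟩
          simp only [ConnectedComponent.mem_supp_iff, hcs]
          exact (ConnectedComponent.eq.mpr hru.symm)
        obtain ⟨hw1, ht1, hrw⟩ := hwt
        have hwmem : w ∈ Subtype.val '' ct.supp := by
          refine ⟨⟨w, hw1⟩, ?_, rfl⟩
          simp only [ConnectedComponent.mem_supp_iff, hct]
          exact (ConnectedComponent.eq.mpr hrw)
        -- now reachability in G - M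
        obtain ⟨c1, hc1⟩ := hCsM
        obtain ⟨c2, hc2⟩ := hCtM
        have hCsMc : Cs ⊆ (Mᶜ : Set V) := by
          rw [hc1]; rintro a ⟨b, -, rfl⟩; exact b.2
        have hCtMc : Ct ⊆ (Mᶜ : Set V) := by
          rw [hc2]; rintro a ⟨b, -, rfl⟩; exact b.2
        have hsCs : s ∈ Cs := hCsub hsmem
        have huCs : u ∈ Cs := hCsub humem
        have htCt : t ∈ Ct := hCtsub htmem
        have hwCt : w ∈ Ct := hCtsub hwmem
        have hreach_su : Rch G M s u := rch_of_mem_comp (hc1 ▸ hsCs) (hc1 ▸ huCs)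
        have hreach_wt : Rch G M w t := rch_of_mem_comp (hc2 ▸ hwCt) (hc2 ▸ htCt)
        have hvM : v ∈ (Mᶜ : Set V) := hvM
        have huM : u ∈ (Mᶜ : Set V) := hCsMc huCs
        have hwM : w ∈ (Mᶜ : Set V) := hCtMc hwCt
        have hst : Rch G M s t :=
          (((hreach_su.trans (Rch.adj huM hvM hau.symm)).trans
            (Rch.adj hvM hwM haw)).trans hreach_wt)
        obtain ⟨hs2, ht2, hr2⟩ := hst
        exact hM.1.2 (s, t) hpB hs2 ht2 hr2
    -- conclude M = M'
    by_contra hne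
    have hss : M' ⊂ M := HasSubset.Subset.ssubset_of_ne hMM (fun h => hne h.symm)
    exact hM.2 M' hss hM'.1
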